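/- Let C = (A_i)_{i∈I} be a finite collection of finite nonempty sets and let c > 0. Assume that for each i ∈ I, at most c·|A_i| of the sets A_j (j ∈ I, including A_i itself) intersect A_i. Then there exists a subset J ⊆ I such that the sets (A_j)_{j∈J} are pairwise disjoint and |⋃_{j∈J} A_j| ≥ |I|/c. -/

import Mathlib

theorem stmt3 {ι α : Type} [Fintype ι] [DecidableEq α] (A : ι → Finset α)
    (hne : ∀ i, (A i).Nonempty) (c : ℝ) (hc : 0 < c)
    (h : ∀ i, (Nat.card {j : ι // ((A i) ∩ (A j)).Nonempty} : ℝ) ≤ c * (A i).card) :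
    ∃ J : Finset ι, (∀ j₁ ∈ J, ∀ j₂ ∈ J, j₁ ≠ j₂ → Disjoint (A j₁) (A j₂)) ∧
      (Fintype.card ι : ℝ) / c ≤ ((J.biUnion A).card : ℝ) := by
  classical
  set S : Finset (Finset ι) :=
    Finset.univ.filter (fun J => ∀ j₁ ∈ J, ∀ j₂ ∈ J, j₁ ≠ j₂ → Disjoint (A j₁) (A j₂)) with hS
  have hSne : S.Nonempty := ⟨∅, by simp [hS]⟩
  obtain ⟨J, hJS, hmax⟩ := S.exists_max_image Finset.card hSne
  have hJ : ∀ j₁ ∈ J, ∀ j₂ ∈ J, j₁ ≠ j₂ → Disjoint (A j₁) (A j₂) := by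
    have := Finset.mem_filter.mp hJS
    exact this.2
  refine ⟨J, hJ, ?_⟩
  -- every i meets some j ∈ J
  have hcov : ∀ i : ι, ∃ j ∈ J, ((A j) ∩ (A i)).Nonempty := by
    intro i
    by_contra hcon
    push_neg at hcon
    have hdisj : ∀ j ∈ J, Disjoint (A j) (A i) := by
      intro j hj
      rw [Finset.disjoint_iff_inter_eq_empty]
      exact hcon j hj
    have hiJ : i ∉ J := by
      intro hi
      have := hdisj i hi
      exact (hne i).ne_empty (disjoint_self.mp this)
    have hins : insert i J ∈ S := by
      rw [hS, Finset.mem_filter]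
      refine ⟨Finset.mem_univ _, ?_⟩
      intro j₁ hj₁ j₂ hj₂ hne12
      rcases Finset.mem_insert.mp hj₁ with h₁ | h₁
      · rcases Finset.mem_insert.mp hj₂ with h₂ | h₂
        · exact absurd (h₁.trans h₂.symm) hne12
        · exact h₁ ▸ (hdisj j₂ h₂).symm
      · rcases Finset.mem_insert.mp hj₂ with h₂ | h₂
        · exact h₂ ▸ hdisj j₁ h₁
        · exact hJ j₁ h₁ j₂ h₂ hne12
    have := hmax _ hins
    rw [Finset.card_insert_of_notMem hiJ] at this
    omega
  -- counting
  have hsub : (Finset.univ : Finset ι) ⊆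
      J.biUnion (fun j => Finset.univ.filter (fun i => ((A j) ∩ (A i)).Nonempty)) := by
    intro i _
    obtain ⟨j, hj, hij⟩ := hcov i
    exact Finset.mem_biUnion.mpr ⟨j, hj, Finset.mem_filter.mpr ⟨Finset.mem_univ _, hij⟩⟩
  have h1 : Fintype.card ι ≤
      ∑ j ∈ J, (Finset.univ.filter (fun i => ((A j) ∩ (A i)).Nonempty)).card := by
    calc Fintype.card ι = (Finset.univ : Finset ι).card := rfl
      _ ≤ (J.biUnion (fun j => Finset.univ.filter (fun i => ((A j) ∩ (A i)).Nonempty))).card :=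
          Finset.card_le_card hsub
      _ ≤ _ := Finset.card_biUnion_le
  have h2 : ∀ j : ι, ((Finset.univ.filter (fun i => ((A j) ∩ (A i)).Nonempty)).card : ℝ)
      ≤ c * (A j).card := by
    intro j
    have := h j
    rwa [Nat.card_eq_fintype_card, Fintype.card_subtype] at this
  have h3 : (Fintype.card ι : ℝ) ≤ c * ((J.biUnion A).card : ℝ) := by
    calc (Fintype.card ι : ℝ)
        ≤ ∑ j ∈ J, ((Finset.univ.filter (fun i => ((A j) ∩ (A i)).Nonempty)).card : ℝ) := by
          exact_mod_cast h1
      _ ≤ ∑ j ∈ J, c * ((A j).card : ℝ) := Finset.sum_le_sum (fun j _ => h2 j)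
      _ = c * ∑ j ∈ J, ((A j).card : ℝ) := by rw [Finset.mul_sum]
      _ = c * ((J.biUnion A).card : ℝ) := by
          rw [Finset.card_biUnion hJ]; push_cast; ring
  rw [div_le_iff₀ hc]
  linarith
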